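/- For every integer d ≥ 2, the polynomial identity ∑_{i=0}^{d} (-1)^{i-1} C(d,i)·(i-1)(d-i-1)/(d-1) · z^i = (1-z)^{d-2}·(1+(d-2)z+z^2) holds in ℚ[z]. -/

import Mathlib

open Polynomial

lemma aux_step (n k : ℕ) : (n+1) * n.choose k = (n+1).choose k * (n + 1 - k) := by
  rw [← Nat.choose_succ_right_eq]
  exact Nat.add_one_mul_choose_eq n k

lemma aux_nat_id (d i : ℕ) (h1 : 1 ≤ i) (h2 : i ≤ d) :
    d.choose i * i * (d - i) = d * ((d - 1) * (d - 2).choose (i - 1)) := by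
  obtain ⟨j, rfl⟩ := Nat.exists_eq_add_of_le h1
  obtain ⟨e, rfl⟩ : ∃ e, d = e + 1 := ⟨d - 1, by omega⟩
  simp only [add_comm 1 j, Nat.add_sub_cancel]
  have h3 : (e+1).choose (j+1) * (j+1) = (e+1) * e.choose j := by
    rw [Nat.add_one_mul_choose_eq]
  rcases Nat.eq_zero_or_pos e with rfl | he
  · simp [Nat.succ_sub_succ]
  · obtain ⟨f, rfl⟩ : ∃ f, e = f + 1 := ⟨e - 1, by omega⟩
    have h5 := aux_step f j
    calc (f+1+1).choose (j+1) * (j+1) * ((f+1+1) - (j+1))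
        = (f+1+1) * ((f+1).choose j * ((f+1) - j)) := by
          rw [h3, show (f+1+1)-(j+1) = (f+1)-j by omega]; ring
      _ = (f+1+1) * ((f+1) * f.choose j) := by rw [← h5]

lemma aux_one_sub_X_pow (n N : ℕ) (h : n < N) :
    ((1 : ℚ[X]) - X) ^ n = ∑ i ∈ Finset.range N, C ((-1:ℚ)^i * n.choose i) * X^i := by
  have base : ((1:ℚ[X]) - X)^n = ∑ i ∈ Finset.range (n+1), C ((-1:ℚ)^i * n.choose i) * X^i := by
    rw [sub_eq_add_neg, add_comm, add_pow]
    refine Finset.sum_congr rfl fun i _ => ?_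
    rw [neg_pow]
    simp [map_mul, ← C_pow, mul_comm, mul_assoc, mul_left_comm]
  rw [base]
  exact Finset.sum_subset (Finset.range_subset_range.2 h) (fun i _ hi => by
    have : n < i := by
      by_contra hc
      exact hi (Finset.mem_range.2 (Nat.lt_succ_of_le (not_lt.1 hc)))
    simp [Nat.choose_eq_zero_of_lt this])

/-- h-polynomial of the Gorenstein pinched Veronese `P_{2,d,(d-1,1)}`:
`∑_{i=0}^{d} (-1)^{i-1} C(d,i)(i-1)(d-i-1)/(d-1) z^i = (1-z)^{d-2}(1+(d-2)z+z^2)`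
in `ℚ[z]`. -/
theorem stmt_10 (d : ℕ) (hd : 2 ≤ d) :
    (∑ i ∈ Finset.range (d + 1),
        Polynomial.C ((-1 : ℚ) ^ (i + 1) * (d.choose i : ℚ) * ((i : ℚ) - 1) *
          ((d : ℚ) - (i : ℚ) - 1) / ((d : ℚ) - 1)) * X ^ i) =
      (1 - X) ^ (d - 2) * (1 + Polynomial.C ((d : ℚ) - 2) * X + X ^ 2) := by
  have hd1 : ((d : ℚ) - 1) ≠ 0 := by
    have : (2:ℚ) ≤ (d:ℚ) := by exact_mod_cast hd
    linarith
  set b : ℕ → ℚ := fun i => if i = 0 then 0 else ((d-2).choose (i-1) : ℚ) with hb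
  -- coefficient identity
  have coeff_eq : ∀ i ∈ Finset.range (d+1),
      C ((-1 : ℚ) ^ (i + 1) * (d.choose i : ℚ) * ((i : ℚ) - 1) *
          ((d : ℚ) - (i : ℚ) - 1) / ((d : ℚ) - 1)) * X ^ i
      = C ((-1:ℚ)^i * d.choose i) * X^i + C ((d:ℚ) * (-1:ℚ)^(i+1) * b i) * X^i := by
    intro i hi
    have hi' : i ≤ d := by
      have := Finset.mem_range.1 hi; omega
    rw [← add_mul, ← C_add]
    refine congrArg (fun t => C t * X^i) ?_
    rcases Nat.eq_zero_or_pos i with rfl | hpos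
    · simp [hb]
      field_simp
      exact hd1
    · have key : (d.choose i : ℚ) * i * ((d:ℚ) - i) = (d:ℚ) * (((d:ℚ)-1) * ((d-2).choose (i-1) : ℚ)) := by
        have := aux_nat_id d i hpos hi'
        have h := congrArg (Nat.cast : ℕ → ℚ) this
        push_cast [Nat.cast_sub hi', Nat.cast_sub (by omega : 1 ≤ d)] at h
        exact h
      have hbne : b i = ((d-2).choose (i-1) : ℚ) := by simp [hb, Nat.pos_iff_ne_zero.1 hpos]
      rw [hbne]
      field_simp
      linear_combination ((-1:ℚ)^(i+1)) * key
  rw [Finset.sum_congr rfl coeff_eq, Finset.sum_add_distrib]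
  -- first sum
  have s1 : (∑ i ∈ Finset.range (d+1), C ((-1:ℚ)^i * d.choose i) * X^i) = (1 - X)^d := by
    rw [aux_one_sub_X_pow d (d+1) (by omega)]
  -- second sum
  have s2 : (∑ i ∈ Finset.range (d+1), C ((d:ℚ) * (-1:ℚ)^(i+1) * b i) * X^i)
      = C (d:ℚ) * (X * (1 - X)^(d-2)) := by
    rw [Finset.sum_range_succ']
    have h0 : C ((d:ℚ) * (-1:ℚ)^(0+1) * b 0) * X^0 = 0 := by simp [hb]
    rw [h0, add_zero]
    rw [aux_one_sub_X_pow (d-2) d (by omega), Finset.mul_sum, Finset.mul_sum]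
    refine Finset.sum_congr rfl fun j _ => ?_
    have hbj : b (j+1) = ((d-2).choose j : ℚ) := by simp [hb]
    rw [hbj]
    have hsgn : ((-1:ℚ))^(j+1+1) = (-1:ℚ)^j := by
      rw [pow_succ, pow_succ]; ring
    rw [hsgn]
    rw [C_mul, C_mul, C_mul]
    ring
  rw [s1, s2]
  -- right-hand side
  have hC : C ((d:ℚ) - 2) = C (d:ℚ) - 2 := by
    rw [map_sub, map_ofNat]
  rw [hC]
  have hsq : ((1:ℚ[X]) - X)^(d-2) * (1 - X)^2 = (1 - X)^d := by
    rw [← pow_add, Nat.sub_add_cancel hd]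
  calc (1 - X)^d + C (d:ℚ) * (X * (1 - X)^(d-2))
      = (1 - X)^(d-2) * (1 - X)^2 + C (d:ℚ) * (X * (1 - X)^(d-2)) := by rw [hsq]
    _ = (1 - X)^(d-2) * (1 + (C (d:ℚ) - 2) * X + X^2) := by ring
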